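/- A complementary basis B of a pLCP with sufficient matrix M has at most n + (n² − n)/2 adjacent complementary bases, where two complementary bases are adjacent if their complementary cones intersect in dimension n−1. -/

import Mathlib

open Matrix

/-- `M` is column sufficient. -/
def ColSuff {n : ℕ} (M : Matrix (Fin n) (Fin n) ℝ) : Prop :=
  ∀ z : Fin n → ℝ, (∀ i, z i * M.mulVec z i ≤ 0) → ∀ i, z i * M.mulVec z i = 0

/-- `M` is sufficient: both `M` and `Mᵀ` are column sufficient. -/
def Suff {n : ℕ} (M : Matrix (Fin n) (Fin n) ℝ) : Prop := ColSuff M ∧ ColSuff Mᵀ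

/-- The matrix `A = [I, -M]`, with columns indexed by `Fin n ⊕ Fin n`. -/
def Amat {n : ℕ} (M : Matrix (Fin n) (Fin n) ℝ) : Matrix (Fin n) (Fin n ⊕ Fin n) ℝ :=
  Matrix.fromCols 1 (-M)

/-- The complementary index. -/
def bar {n : ℕ} : Fin n ⊕ Fin n → Fin n ⊕ Fin n
  | .inl i => .inr i
  | .inr i => .inl i

/-- `B` is a basis of `A = [I, -M]`: `n` linearly independent columns. -/
def IsBasis {n : ℕ} (M : Matrix (Fin n) (Fin n) ℝ) (B : Finset (Fin n ⊕ Fin n)) : Prop :=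
  B.card = n ∧ LinearIndependent ℝ (fun j : B => (Amat M)ᵀ (j : Fin n ⊕ Fin n))

/-- A complementary basis: a basis containing exactly one of each complementary pair. -/
def IsComplBasis {n : ℕ} (M : Matrix (Fin n) (Fin n) ℝ) (B : Finset (Fin n ⊕ Fin n)) : Prop :=
  IsBasis M B ∧ ∀ i : Fin n, Xor' (Sum.inl i ∈ B) (Sum.inr i ∈ B)

/-- The complementary cone `𝒞(J)`: nonnegative combinations of the columns of `A` indexed by `J`. -/
def coneOf {n : ℕ} (M : Matrix (Fin n) (Fin n) ℝ) (J : Finset (Fin n ⊕ Fin n)) :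
    Set (Fin n → ℝ) :=
  {y | ∃ c : Fin n ⊕ Fin n → ℝ, (∀ j, 0 ≤ c j) ∧ (∀ j ∉ J, c j = 0) ∧ y = (Amat M).mulVec c}


lemma mulVec_eq_sum {n : ℕ} (M : Matrix (Fin n) (Fin n) ℝ) (c : Fin n ⊕ Fin n → ℝ) :
    (Amat M).mulVec c = ∑ j, c j • (Amat M)ᵀ j := by
  ext i
  simp [Matrix.mulVec, dotProduct, Finset.sum_apply, mul_comm]


lemma amat_decomp {n : ℕ} (M : Matrix (Fin n) (Fin n) ℝ) (c : Fin n ⊕ Fin n → ℝ) :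
    (Amat M).mulVec c = (fun i => c (Sum.inl i)) - M.mulVec (fun i => c (Sum.inr i)) := by
  have h : c = Sum.elim (fun i => c (Sum.inl i)) (fun i => c (Sum.inr i)) := by
    funext j; cases j <;> rfl
  rw [Amat, h, Matrix.fromCols_mulVec_sumElim, Matrix.one_mulVec, Matrix.neg_mulVec]
  abel


lemma prod_zero {n : ℕ} {M : Matrix (Fin n) (Fin n) ℝ} (hM : ColSuff M)
    {B B' : Finset (Fin n ⊕ Fin n)}
    (hB : ∀ i : Fin n, Xor' (Sum.inl i ∈ B) (Sum.inr i ∈ B))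
    (hB' : ∀ i : Fin n, Xor' (Sum.inl i ∈ B') (Sum.inr i ∈ B'))
    {c c' : Fin n ⊕ Fin n → ℝ}
    (hc1 : ∀ j, 0 ≤ c j) (hc2 : ∀ j ∉ B, c j = 0)
    (hc1' : ∀ j, 0 ≤ c' j) (hc2' : ∀ j ∉ B', c' j = 0)
    (heq : (Amat M).mulVec c = (Amat M).mulVec c') (i : Fin n) :
    c (Sum.inr i) * c' (Sum.inl i) = 0 ∧ c (Sum.inl i) * c' (Sum.inr i) = 0 := by
  set w : Fin n → ℝ := fun i => c (Sum.inl i) with hw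
  set z : Fin n → ℝ := fun i => c (Sum.inr i) with hz
  set w' : Fin n → ℝ := fun i => c' (Sum.inl i) with hw'
  set z' : Fin n → ℝ := fun i => c' (Sum.inr i) with hz'
  have hwz : ∀ k, z k * w k = 0 := by
    intro k
    rcases hB k with ⟨_, h2⟩ | ⟨_, h2⟩
    · simp [hz, hw, hc2 _ h2]
    · simp [hz, hw, hc2 _ h2]
  have hwz' : ∀ k, z' k * w' k = 0 := by
    intro k
    rcases hB' k with ⟨_, h2⟩ | ⟨_, h2⟩
    · simp [hz', hw', hc2' _ h2]
    · simp [hz', hw', hc2' _ h2]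
  have key : w - M.mulVec z = w' - M.mulVec z' := by
    rw [← amat_decomp, ← amat_decomp, heq]
  have hMu : M.mulVec (z - z') = w - w' := by
    rw [Matrix.mulVec_sub]
    have : M.mulVec z - M.mulVec z' = (w - (w - M.mulVec z)) - (w' - (w' - M.mulVec z')) := by
      abel
    rw [this, key]; abel
  have hneg : ∀ k, (z - z') k * M.mulVec (z - z') k ≤ 0 := by
    intro k
    rw [hMu]
    have e : (z - z') k * (w - w') k = -(z k * w' k + z' k * w k) := by
      have h1 := hwz k; have h2 := hwz' k
      simp only [Pi.sub_apply]; nlinarith [h1, h2]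
    rw [e]
    have := mul_nonneg (hc1 (Sum.inr k)) (hc1' (Sum.inl k))
    have := mul_nonneg (hc1' (Sum.inr k)) (hc1 (Sum.inl k))
    simp only [hz, hw', hz', hw] at *
    linarith
  have h0 := hM (z - z') hneg i
  rw [hMu] at h0
  have e : (z - z') i * (w - w') i = -(z i * w' i + z' i * w i) := by
    have h1 := hwz i; have h2 := hwz' i
    simp only [Pi.sub_apply]; nlinarith [h1, h2]
  rw [e] at h0
  have hz0 : 0 ≤ z i * w' i := mul_nonneg (hc1 _) (hc1' _)
  have hz1 : 0 ≤ z' i * w i := mul_nonneg (hc1' _) (hc1 _)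
  constructor
  · -- z i * w' i = 0
    have : z i * w' i = 0 := by linarith
    exact this
  · have : z' i * w i = 0 := by linarith
    linarith [this]


noncomputable def cbasis {n : ℕ} (M : Matrix (Fin n) (Fin n) ℝ) {B : Finset (Fin n ⊕ Fin n)}
    (hB : IsBasis M B) (hne : Nonempty ↥B) : Module.Basis ↥B ℝ (Fin n → ℝ) :=
  basisOfLinearIndependentOfCardEqFinrank hB.2
    (by simp [Fintype.card_coe, hB.1, Module.finrank_fintype_fun_eq_card])


lemma cbasis_apply {n : ℕ} (M : Matrix (Fin n) (Fin n) ℝ) {B : Finset (Fin n ⊕ Fin n)}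
    (hB : IsBasis M B) (hne : Nonempty ↥B) (j : ↥B) :
    cbasis M hB hne j = (Amat M)ᵀ (j : Fin n ⊕ Fin n) := by
  rw [cbasis, coe_basisOfLinearIndependentOfCardEqFinrank]


lemma repr_eq {n : ℕ} (M : Matrix (Fin n) (Fin n) ℝ) {B : Finset (Fin n ⊕ Fin n)}
    (hB : IsBasis M B) (hne : Nonempty ↥B) {c : Fin n ⊕ Fin n → ℝ}
    (hc2 : ∀ j ∉ B, c j = 0) (j : ↥B) :
    (cbasis M hB hne).repr ((Amat M).mulVec c) j = c j := by
  have h1 : (Amat M).mulVec c = ∑ k : ↥B, c k • cbasis M hB hne k := by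
    rw [mulVec_eq_sum]
    rw [← Finset.sum_subset B.subset_univ (fun x _ hx => by simp [hc2 x hx])]
    rw [← Finset.sum_coe_sort B (fun k => c k • (Amat M)ᵀ k)]
    exact Finset.sum_congr rfl fun k _ => by rw [cbasis_apply]
  rw [h1]
  simp only [map_sum, _root_.map_smul, Module.Basis.repr_self]
  rw [Finsupp.finset_sum_apply]
  simp only [Finsupp.smul_apply, Finsupp.single_apply, smul_eq_mul]
  rw [Finset.sum_eq_single j]
  · simp
  · intro b _ hb; simp [hb]
  · simp


lemma vanish_dim {n : ℕ} {ι : Type*} [Fintype ι] (b : Module.Basis ι ℝ (Fin n → ℝ))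
    {S : Set (Fin n → ℝ)} {j1 j2 : ι} (hj : j1 ≠ j2)
    (h1 : ∀ y ∈ S, b.repr y j1 = 0) (h2 : ∀ y ∈ S, b.repr y j2 = 0) :
    Module.finrank ℝ (vectorSpan ℝ S) ≤ n - 2 := by
  set F : (Fin n → ℝ) →ₗ[ℝ] ℝ × ℝ := LinearMap.prod (b.coord j1) (b.coord j2) with hF
  have hsur : Function.Surjective F := by
    intro p
    refine ⟨p.1 • b j1 + p.2 • b j2, ?_⟩
    simp [hF, Module.Basis.coord_apply, Module.Basis.repr_self, Finsupp.single_apply, hj, hj.symm]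
  have hspan : vectorSpan ℝ S ≤ LinearMap.ker F := by
    rw [vectorSpan_def, Submodule.span_le]
    rintro v ⟨x, hx, y, hy, rfl⟩
    simp only [SetLike.mem_coe, LinearMap.mem_ker, hF, LinearMap.prod_apply, Function.prod,
      LinearMap.map_sub, Module.Basis.coord_apply, vsub_eq_sub]
    simp [h1 x hx, h1 y hy, h2 x hx, h2 y hy, Prod.ext_iff]
  have hrank : Module.finrank ℝ (LinearMap.ker F) = n - 2 := by
    have := LinearMap.finrank_range_add_finrank_ker F
    rw [LinearMap.range_eq_top.mpr hsur] at this
    simp only [finrank_top, Module.finrank_fintype_fun_eq_card, Fintype.card_fin] at this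
    have h2' : Module.finrank ℝ (ℝ × ℝ) = 2 := by
      simp [Module.finrank_prod]
    rw [h2'] at this
    omega
  calc Module.finrank ℝ (vectorSpan ℝ S) ≤ Module.finrank ℝ (LinearMap.ker F) :=
        Submodule.finrank_mono hspan
    _ = n - 2 := hrank


lemma cone_add {n : ℕ} {M : Matrix (Fin n) (Fin n) ℝ} {J : Finset (Fin n ⊕ Fin n)}
    {y1 y2 : Fin n → ℝ} (h1 : y1 ∈ coneOf M J) (h2 : y2 ∈ coneOf M J) :
    y1 + y2 ∈ coneOf M J := by
  obtain ⟨c1, hc1a, hc1b, rfl⟩ := h1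
  obtain ⟨c2, hc2a, hc2b, rfl⟩ := h2
  exact ⟨c1 + c2, fun j => add_nonneg (hc1a j) (hc2a j),
    fun j hj => by simp [hc1b j hj, hc2b j hj],
    by rw [Matrix.mulVec_add]⟩


lemma dichotomy {n : ℕ} {M : Matrix (Fin n) (Fin n) ℝ} (hM : ColSuff M)
    {B B' : Finset (Fin n ⊕ Fin n)} (hB : IsComplBasis M B) (hB' : IsComplBasis M B')
    (hne : Nonempty ↥B) (hne' : Nonempty ↥B') (i : Fin n)
    (hi : ¬(Sum.inl i ∈ B ↔ Sum.inl i ∈ B')) :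
    ∃ (j : ↥B) (j' : ↥B'),
      ((j : Fin n ⊕ Fin n) = Sum.inl i ∨ (j : Fin n ⊕ Fin n) = Sum.inr i) ∧
      ((j' : Fin n ⊕ Fin n) = Sum.inl i ∨ (j' : Fin n ⊕ Fin n) = Sum.inr i) ∧
      ((∀ y ∈ coneOf M B ∩ coneOf M B', (cbasis M hB.1 hne).repr y j = 0) ∨
       (∀ y ∈ coneOf M B ∩ coneOf M B', (cbasis M hB'.1 hne').repr y j' = 0)) := by
  by_cases hl : Sum.inl i ∈ B
  · have hl' : Sum.inl i ∉ B' := fun h => hi ⟨fun _ => h, fun _ => hl⟩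
    have hr' : Sum.inr i ∈ B' := by
      rcases hB'.2 i with ⟨h1, _⟩ | ⟨h1, _⟩
      · exact absurd h1 hl'
      · exact h1
    refine ⟨⟨Sum.inl i, hl⟩, ⟨Sum.inr i, hr'⟩, Or.inl rfl, Or.inr rfl, ?_⟩
    by_contra hcon
    push_neg at hcon
    obtain ⟨⟨y1, hy1, hy1ne⟩, ⟨y2, hy2, hy2ne⟩⟩ := hcon
    have hyS : y1 + y2 ∈ coneOf M B ∩ coneOf M B' :=
      ⟨cone_add hy1.1 hy2.1, cone_add hy1.2 hy2.2⟩
    obtain ⟨c, hca, hcb, hc⟩ := hyS.1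
    obtain ⟨c', hca', hcb', hc'⟩ := hyS.2
    have hrepr : (cbasis M hB.1 hne).repr (y1 + y2) ⟨Sum.inl i, hl⟩ = c (Sum.inl i) := by
      rw [hc]; exact repr_eq M hB.1 hne hcb _
    have hrepr' : (cbasis M hB'.1 hne').repr (y1 + y2) ⟨Sum.inr i, hr'⟩ = c' (Sum.inr i) := by
      rw [hc']; exact repr_eq M hB'.1 hne' hcb' _
    -- positivity of the two coordinates
    have hpos : 0 < c (Sum.inl i) := by
      rw [← hrepr, map_add, Finsupp.add_apply]
      obtain ⟨d1, hd1a, hd1b, hd1⟩ := hy1.1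
      obtain ⟨d2, hd2a, hd2b, hd2⟩ := hy2.1
      have e1 : (cbasis M hB.1 hne).repr y1 ⟨Sum.inl i, hl⟩ = d1 (Sum.inl i) := by
        rw [hd1]; exact repr_eq M hB.1 hne hd1b _
      have e2 : (cbasis M hB.1 hne).repr y2 ⟨Sum.inl i, hl⟩ = d2 (Sum.inl i) := by
        rw [hd2]; exact repr_eq M hB.1 hne hd2b _
      rw [e1, e2]
      rcases lt_or_eq_of_le (hd1a (Sum.inl i)) with h | h
      · linarith [hd2a (Sum.inl i)]
      · exact absurd (e1.trans h.symm) hy1ne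
    have hpos' : 0 < c' (Sum.inr i) := by
      rw [← hrepr', map_add, Finsupp.add_apply]
      obtain ⟨d1, hd1a, hd1b, hd1⟩ := hy1.2
      obtain ⟨d2, hd2a, hd2b, hd2⟩ := hy2.2
      have e1 : (cbasis M hB'.1 hne').repr y1 ⟨Sum.inr i, hr'⟩ = d1 (Sum.inr i) := by
        rw [hd1]; exact repr_eq M hB'.1 hne' hd1b _
      have e2 : (cbasis M hB'.1 hne').repr y2 ⟨Sum.inr i, hr'⟩ = d2 (Sum.inr i) := by
        rw [hd2]; exact repr_eq M hB'.1 hne' hd2b _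
      rw [e1, e2]
      rcases lt_or_eq_of_le (hd2a (Sum.inr i)) with h | h
      · linarith [hd1a (Sum.inr i)]
      · exact absurd (e2.trans h.symm) hy2ne
    have := (prod_zero hM hB.2 hB'.2 hca hcb hca' hcb' (hc ▸ hc' ▸ rfl : (Amat M).mulVec c = (Amat M).mulVec c') i).2
    nlinarith [this, hpos, hpos']
  · have hl' : Sum.inl i ∈ B' := by
      by_contra h
      exact hi ⟨fun h2 => absurd h2 hl, fun h2 => absurd h2 h⟩
    have hr : Sum.inr i ∈ B := by
      rcases hB.2 i with ⟨h1, _⟩ | ⟨h1, _⟩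
      · exact absurd h1 hl
      · exact h1
    refine ⟨⟨Sum.inr i, hr⟩, ⟨Sum.inl i, hl'⟩, Or.inr rfl, Or.inl rfl, ?_⟩
    by_contra hcon
    push_neg at hcon
    obtain ⟨⟨y1, hy1, hy1ne⟩, ⟨y2, hy2, hy2ne⟩⟩ := hcon
    have hyS : y1 + y2 ∈ coneOf M B ∩ coneOf M B' :=
      ⟨cone_add hy1.1 hy2.1, cone_add hy1.2 hy2.2⟩
    obtain ⟨c, hca, hcb, hc⟩ := hyS.1
    obtain ⟨c', hca', hcb', hc'⟩ := hyS.2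
    have hrepr : (cbasis M hB.1 hne).repr (y1 + y2) ⟨Sum.inr i, hr⟩ = c (Sum.inr i) := by
      rw [hc]; exact repr_eq M hB.1 hne hcb _
    have hrepr' : (cbasis M hB'.1 hne').repr (y1 + y2) ⟨Sum.inl i, hl'⟩ = c' (Sum.inl i) := by
      rw [hc']; exact repr_eq M hB'.1 hne' hcb' _
    have hpos : 0 < c (Sum.inr i) := by
      rw [← hrepr, map_add, Finsupp.add_apply]
      obtain ⟨d1, hd1a, hd1b, hd1⟩ := hy1.1
      obtain ⟨d2, hd2a, hd2b, hd2⟩ := hy2.1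
      have e1 : (cbasis M hB.1 hne).repr y1 ⟨Sum.inr i, hr⟩ = d1 (Sum.inr i) := by
        rw [hd1]; exact repr_eq M hB.1 hne hd1b _
      have e2 : (cbasis M hB.1 hne).repr y2 ⟨Sum.inr i, hr⟩ = d2 (Sum.inr i) := by
        rw [hd2]; exact repr_eq M hB.1 hne hd2b _
      rw [e1, e2]
      rcases lt_or_eq_of_le (hd1a (Sum.inr i)) with h | h
      · linarith [hd2a (Sum.inr i)]
      · exact absurd (e1.trans h.symm) hy1ne
    have hpos' : 0 < c' (Sum.inl i) := by
      rw [← hrepr', map_add, Finsupp.add_apply]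
      obtain ⟨d1, hd1a, hd1b, hd1⟩ := hy1.2
      obtain ⟨d2, hd2a, hd2b, hd2⟩ := hy2.2
      have e1 : (cbasis M hB'.1 hne').repr y1 ⟨Sum.inl i, hl'⟩ = d1 (Sum.inl i) := by
        rw [hd1]; exact repr_eq M hB'.1 hne' hd1b _
      have e2 : (cbasis M hB'.1 hne').repr y2 ⟨Sum.inl i, hl'⟩ = d2 (Sum.inl i) := by
        rw [hd2]; exact repr_eq M hB'.1 hne' hd2b _
      rw [e1, e2]
      rcases lt_or_eq_of_le (hd2a (Sum.inl i)) with h | h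
      · linarith [hd1a (Sum.inl i)]
      · exact absurd (e2.trans h.symm) hy2ne
    have := (prod_zero hM hB.2 hB'.2 hca hcb hca' hcb' (hc ▸ hc' ▸ rfl : (Amat M).mulVec c = (Amat M).mulVec c') i).1
    nlinarith [this, hpos, hpos']


lemma ne_of_pair {n : ℕ} {s : Finset (Fin n ⊕ Fin n)} {i1 i2 : Fin n} (h : i1 ≠ i2)
    {a b : ↥s} (ha : (a : Fin n ⊕ Fin n) = Sum.inl i1 ∨ (a : Fin n ⊕ Fin n) = Sum.inr i1)
    (hb : (b : Fin n ⊕ Fin n) = Sum.inl i2 ∨ (b : Fin n ⊕ Fin n) = Sum.inr i2) : a ≠ b := by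
  intro e
  subst e
  rcases ha with ha | ha <;> rcases hb with hb | hb <;> rw [ha] at hb <;> simp_all

theorem stmt_19 {n : ℕ} (M : Matrix (Fin n) (Fin n) ℝ) (hM : Suff M)
    (B : Finset (Fin n ⊕ Fin n)) (hB : IsComplBasis M B) :
    {B' : Finset (Fin n ⊕ Fin n) | IsComplBasis M B' ∧ B' ≠ B ∧
      Module.finrank ℝ (vectorSpan ℝ (coneOf M B ∩ coneOf M B')) = n - 1}.ncard ≤
      n + (n ^ 2 - n) / 2 := by
  classical
  set S := {B' : Finset (Fin n ⊕ Fin n) | IsComplBasis M B' ∧ B' ≠ B ∧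
      Module.finrank ℝ (vectorSpan ℝ (coneOf M B ∩ coneOf M B')) = n - 1} with hS
  set Φ : Finset (Fin n ⊕ Fin n) → Finset (Fin n) :=
    fun B' => Finset.univ.filter (fun i => ¬(Sum.inl i ∈ B ↔ Sum.inl i ∈ B')) with hΦ
  set T : Finset (Finset (Fin n)) :=
    (Finset.univ.powersetCard 1) ∪ (Finset.univ.powersetCard 2) with hT
  -- main claim: for B' in S, Φ B' has card 1 or 2
  have hmain : ∀ B' ∈ S, (Φ B').card = 1 ∨ (Φ B').card = 2 := by
    intro B' hB'
    obtain ⟨hB'c, hB'ne, hB'dim⟩ := hB'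
    have hcard_pos : (Φ B').Nonempty := by
      rw [Finset.filter_nonempty_iff]
      by_contra h
      push_neg at h
      apply hB'ne
      ext j
      have hl : ∀ i : Fin n, (Sum.inl i ∈ B ↔ Sum.inl i ∈ B') := by
        intro i
        have := h i (Finset.mem_univ i)
        tauto
      cases j with
      | inl i => exact (hl i).symm
      | inr i =>
        have h1 := hB.2 i
        have h2 := hB'c.2 i
        have := hl i
        unfold Xor' Xor at h1 h2
        tauto
    have hcard_le : (Φ B').card ≤ 2 := by
      by_contra hgt
      push_neg at hgt
      rw [Finset.two_lt_card_iff] at hgt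
      obtain ⟨i1, i2, i3, hi1, hi2, hi3, h12, h13, h23⟩ := hgt
      have hn3 : 3 ≤ n := by
        have := Finset.card_le_univ (Φ B')
        simp only [Finset.card_univ, Fintype.card_fin] at this
        have : 2 < (Φ B').card := Finset.two_lt_card_iff.mpr ⟨i1, i2, i3, hi1, hi2, hi3, h12, h13, h23⟩
        omega
      have hneB : Nonempty ↥B := by
        rw [Finset.nonempty_coe_sort]
        rw [← Finset.card_pos, hB.1.1]; omega
      have hneB' : Nonempty ↥B' := by
        rw [Finset.nonempty_coe_sort]
        rw [← Finset.card_pos, hB'c.1.1]; omega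
      have hmem : ∀ i ∈ Φ B', ¬(Sum.inl i ∈ B ↔ Sum.inl i ∈ B') := by
        intro i hi
        exact (Finset.mem_filter.mp hi).2
      obtain ⟨j1, j1', hj1, hj1', hd1⟩ := dichotomy hM.1 hB hB'c hneB hneB' i1 (hmem i1 hi1)
      obtain ⟨j2, j2', hj2, hj2', hd2⟩ := dichotomy hM.1 hB hB'c hneB hneB' i2 (hmem i2 hi2)
      obtain ⟨j3, j3', hj3, hj3', hd3⟩ := dichotomy hM.1 hB hB'c hneB hneB' i3 (hmem i3 hi3)
      have hfin : Module.finrank ℝ (vectorSpan ℝ (coneOf M B ∩ coneOf M B')) ≤ n - 2 := by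
        rcases hd1 with p1 | q1
        · rcases hd2 with p2 | q2
          · exact vanish_dim _ (ne_of_pair h12 hj1 hj2) p1 p2
          · rcases hd3 with p3 | q3
            · exact vanish_dim _ (ne_of_pair h13 hj1 hj3) p1 p3
            · exact vanish_dim _ (ne_of_pair h23 hj2' hj3') q2 q3
        · rcases hd2 with p2 | q2
          · rcases hd3 with p3 | q3
            · exact vanish_dim _ (ne_of_pair h23 hj2 hj3) p2 p3
            · exact vanish_dim _ (ne_of_pair h13 hj1' hj3') q1 q3
          · exact vanish_dim _ (ne_of_pair h12 hj1' hj2') q1 q2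
      rw [hB'dim] at hfin
      omega
    have := hcard_pos
    rw [← Finset.card_pos] at this
    omega
  -- injectivity on S
  have hinj : Set.InjOn Φ S := by
    intro B1 hB1 B2 hB2 he
    obtain ⟨hB1c, _, _⟩ := hB1
    obtain ⟨hB2c, _, _⟩ := hB2
    have hl : ∀ i : Fin n, (Sum.inl i ∈ B1 ↔ Sum.inl i ∈ B2) := by
      intro i
      have h1 : (i ∈ Φ B1) = (i ∈ Φ B2) := by rw [he]
      simp only [hΦ, Finset.mem_filter, Finset.mem_univ, true_and, eq_iff_iff] at h1
      tauto
    ext j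
    cases j with
    | inl i => exact hl i
    | inr i =>
      have h1 := hB1c.2 i
      have h2 := hB2c.2 i
      have := hl i
      unfold Xor' Xor at h1 h2
      tauto
  have hmapsto : ∀ B' ∈ S, Φ B' ∈ (↑T : Set (Finset (Fin n))) := by
    intro B' hB'
    rcases hmain B' hB' with h | h <;>
    · simp only [hT, Finset.coe_union, Set.mem_union, Finset.mem_coe,
        Finset.mem_powersetCard_univ]
      tauto
  have hcount := Set.ncard_le_ncard_of_injOn Φ hmapsto hinj (T : Set (Finset (Fin n))).toFinite
  rw [Set.ncard_coe_finset] at hcount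
  refine hcount.trans ?_
  have hTcard : T.card ≤ n + n * (n - 1) / 2 := by
    calc T.card ≤ (Finset.univ.powersetCard 1 : Finset (Finset (Fin n))).card +
        (Finset.univ.powersetCard 2 : Finset (Finset (Fin n))).card := Finset.card_union_le _ _
      _ = n + n * (n - 1) / 2 := by
        rw [Finset.card_powersetCard, Finset.card_powersetCard]
        simp [Nat.choose_one_right, Nat.choose_two_right]
  have hpow : n * (n - 1) = n ^ 2 - n := by
    cases n with
    | zero => simp
    | succ m => simp [pow_two, Nat.succ_sub_one]; ring_nf; omega
  rw [← hpow]
  exact hTcard
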